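/- Let $\Omega \subseteq \mathbb{R}^N$ be an open connected set and let $u, v$ be twice continuously differentiable functions on $\Omega$ with $v > 0$ and $-\Delta v > 0$ on $\Omega$. If $L(u,v) = (\Delta u - (u/v)\Delta v)^2 - (2\Delta v/v)\,|\nabla u - (u/v)\nabla v|^2 = 0$ everywhere on $\Omega$, then there exists $\alpha \in \mathbb{R}$ such that $u = \alpha v$ on $\Omega$. Conversely, if $u = \alpha v$ for some real $\alpha$, then $L(u,v) = 0$ on $\Omega$. -/

import Mathlib

open MeasureTheory

noncomputable def lap {N : ℕ} (u : EuclideanSpace ℝ (Fin N) → ℝ)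
    (x : EuclideanSpace ℝ (Fin N)) : ℝ :=
  ∑ i : Fin N, fderiv ℝ (fun y => fderiv ℝ u y (EuclideanSpace.single i 1)) x
    (EuclideanSpace.single i 1)

/-- A function with vanishing derivative on an open preconnected set is constant there. -/
lemma const_of_fderiv_zero {E : Type*} [NormedAddCommGroup E] [NormedSpace ℝ E]
    {Ω : Set E} (hΩ : IsOpen Ω) (hconn : IsPreconnected Ω) (f : E → ℝ)
    (hd : DifferentiableOn ℝ f Ω) (hf' : ∀ x ∈ Ω, fderiv ℝ f x = 0)
    {a b : E} (ha : a ∈ Ω) (hb : b ∈ Ω) : f a = f b := by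
  -- locally constant
  have hloc : ∀ x ∈ Ω, ∃ r > 0, Metric.ball x r ⊆ Ω ∧ ∀ y ∈ Metric.ball x r, f y = f x := by
    intro x hx
    obtain ⟨r, hr, hball⟩ := Metric.isOpen_iff.mp hΩ x hx
    refine ⟨r, hr, hball, fun y hy => ?_⟩
    refine (convex_ball x r).is_const_of_fderivWithin_eq_zero
      (hd.mono hball) (fun z hz => ?_) hy (Metric.mem_ball_self hr)
    rw [fderivWithin_of_isOpen Metric.isOpen_ball hz]
    exact hf' z (hball hz)
  by_contra hne
  -- open sets where f = f a and f ≠ f a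
  set U : Set E := {x | ∃ r > 0, Metric.ball x r ⊆ Ω ∧ ∀ y ∈ Metric.ball x r, f y = f a}
  set V : Set E := {x | ∃ r > 0, Metric.ball x r ⊆ Ω ∧ ∀ y ∈ Metric.ball x r, f y ≠ f a}
  have hU : IsOpen U := by
    apply Metric.isOpen_iff.mpr
    rintro x ⟨r, hr, hsub, hc⟩
    refine ⟨r / 2, by linarith, fun y hy => ?_⟩
    have hy' : Metric.ball y (r / 2) ⊆ Metric.ball x r := by
      intro z hz
      have := Metric.mem_ball.mp hz
      have := Metric.mem_ball.mp hy
      exact Metric.mem_ball.mpr (by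
        calc dist z x ≤ dist z y + dist y x := dist_triangle z y x
        _ < r / 2 + r / 2 := by linarith
        _ = r := by ring)
    exact ⟨r / 2, by linarith, hy'.trans hsub, fun z hz => hc z (hy' hz)⟩
  have hV : IsOpen V := by
    apply Metric.isOpen_iff.mpr
    rintro x ⟨r, hr, hsub, hc⟩
    refine ⟨r / 2, by linarith, fun y hy => ?_⟩
    have hy' : Metric.ball y (r / 2) ⊆ Metric.ball x r := by
      intro z hz
      have := Metric.mem_ball.mp hz
      have := Metric.mem_ball.mp hy
      exact Metric.mem_ball.mpr (by
        calc dist z x ≤ dist z y + dist y x := dist_triangle z y x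
        _ < r / 2 + r / 2 := by linarith
        _ = r := by ring)
    exact ⟨r / 2, by linarith, hy'.trans hsub, fun z hz => hc z (hy' hz)⟩
  have hcover : Ω ⊆ U ∪ V := by
    intro x hx
    obtain ⟨r, hr, hsub, hc⟩ := hloc x hx
    by_cases hfa : f x = f a
    · exact Or.inl ⟨r, hr, hsub, fun y hy => (hc y hy).trans hfa⟩
    · exact Or.inr ⟨r, hr, hsub, fun y hy => (hc y hy).symm ▸ hfa⟩
  have haU : a ∈ Ω ∩ U := by
    obtain ⟨r, hr, hsub, hc⟩ := hloc a ha
    exact ⟨ha, r, hr, hsub, hc⟩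
  have hbV : b ∈ Ω ∩ V := by
    obtain ⟨r, hr, hsub, hc⟩ := hloc b hb
    exact ⟨hb, r, hr, hsub, fun y hy => (hc y hy).symm ▸ fun h => hne h.symm⟩
  obtain ⟨z, _, ⟨rU, hrU, _, hcU⟩, ⟨rV, hrV, _, hcV⟩⟩ :=
    hconn U V hU hV hcover ⟨a, haU⟩ ⟨b, hbV⟩
  exact hcV z (Metric.mem_ball_self hrV) (hcU z (Metric.mem_ball_self hrU))

theorem picone_equality_case_biharmonic {N : ℕ} (Ω : Set (EuclideanSpace ℝ (Fin N)))
    (hΩ : IsOpen Ω) (hconn : IsPreconnected Ω)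
    (u v : EuclideanSpace ℝ (Fin N) → ℝ)
    (hu : ContDiffOn ℝ 2 u Ω) (hv : ContDiffOn ℝ 2 v Ω)
    (hvpos : ∀ x ∈ Ω, 0 < v x) (hlapv : ∀ x ∈ Ω, 0 < -lap v x) :
    ((∀ x ∈ Ω,
        (lap u x - (u x / v x) * lap v x) ^ 2
          - (2 * lap v x / v x) * ‖gradient u x - (u x / v x) • gradient v x‖ ^ 2 = 0) →
      ∃ α : ℝ, ∀ x ∈ Ω, u x = α * v x) ∧
    (∀ α : ℝ, (∀ x ∈ Ω, u x = α * v x) →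
      ∀ x ∈ Ω,
        (lap u x - (u x / v x) * lap v x) ^ 2
          - (2 * lap v x / v x) * ‖gradient u x - (u x / v x) • gradient v x‖ ^ 2 = 0) := by
  have hud : DifferentiableOn ℝ u Ω := hu.differentiableOn (by norm_num)
  have hvd : DifferentiableOn ℝ v Ω := hv.differentiableOn (by norm_num)
  have hudAt : ∀ x ∈ Ω, DifferentiableAt ℝ u x := fun x hx =>
    (hud x hx).differentiableAt (hΩ.mem_nhds hx)
  have hvdAt : ∀ x ∈ Ω, DifferentiableAt ℝ v x := fun x hx =>
    (hvd x hx).differentiableAt (hΩ.mem_nhds hx)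
  constructor
  · intro hL
    rcases Set.eq_empty_or_nonempty Ω with hemp | ⟨x₀, hx₀⟩
    · exact ⟨0, fun x hx => absurd hx (hemp ▸ Set.notMem_empty x)⟩
    -- gradient part vanishes on Ω
    have hgrad : ∀ x ∈ Ω, gradient u x = (u x / v x) • gradient v x := by
      intro x hx
      have hc : 2 * lap v x / v x < 0 :=
        div_neg_of_neg_of_pos (by have := hlapv x hx; linarith) (hvpos x hx)
      have hB : (0:ℝ) ≤ ‖gradient u x - (u x / v x) • gradient v x‖ ^ 2 := sq_nonneg _
      have hA : (0:ℝ) ≤ (lap u x - (u x / v x) * lap v x) ^ 2 := sq_nonneg _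
      have := hL x hx
      have hB0 : ‖gradient u x - (u x / v x) • gradient v x‖ ^ 2 = 0 := by nlinarith
      have : gradient u x - (u x / v x) • gradient v x = 0 := by
        have := pow_eq_zero_iff (n := 2) (by norm_num) |>.mp hB0
        exact norm_eq_zero.mp this
      exact sub_eq_zero.mp this
    -- fderiv u x = (u x / v x) • fderiv v x on Ω
    have hfd : ∀ x ∈ Ω, fderiv ℝ u x = (u x / v x) • fderiv ℝ v x := by
      intro x hx
      have h1 := hgrad x hx
      have h2 : (InnerProductSpace.toDual ℝ (EuclideanSpace ℝ (Fin N))) (gradient u x)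
          = (InnerProductSpace.toDual ℝ (EuclideanSpace ℝ (Fin N)))
              ((u x / v x) • gradient v x) := by rw [h1]
      unfold gradient at h2
      simpa [LinearIsometryEquiv.apply_symm_apply, _root_.map_smul] using h2
    -- fderiv of u/v vanishes on Ω
    have hquot : ∀ x ∈ Ω, fderiv ℝ (fun y => u y / v y) x = 0 := by
      intro x hx
      have hvne : v x ≠ 0 := ne_of_gt (hvpos x hx)
      have hinv : HasFDerivAt (fun y => (v y)⁻¹) ((-(v x ^ 2)⁻¹) • fderiv ℝ v x) x :=
        (hasDerivAt_inv hvne).comp_hasFDerivAt x (hvdAt x hx).hasFDerivAt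
      have hmul : HasFDerivAt (fun y => u y / v y)
          (u x • ((-(v x ^ 2)⁻¹) • fderiv ℝ v x) + (v x)⁻¹ • fderiv ℝ u x) x := by
        simp only [div_eq_mul_inv]
        exact (hudAt x hx).hasFDerivAt.mul hinv
      have h0 : u x • ((-(v x ^ 2)⁻¹) • fderiv ℝ v x) + (v x)⁻¹ • fderiv ℝ u x = 0 := by
        rw [hfd x hx, smul_smul, smul_smul, ← add_smul]
        have : u x * (-(v x ^ 2)⁻¹) + (v x)⁻¹ * (u x / v x) = 0 := by
          field_simp
          ring
        rw [this, zero_smul]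
      rw [hmul.fderiv, h0]
    have hdiv : DifferentiableOn ℝ (fun y => u y / v y) Ω := by
      intro x hx
      have hvne : v x ≠ 0 := ne_of_gt (hvpos x hx)
      have hinv : HasFDerivAt (fun y => (v y)⁻¹) ((-(v x ^ 2)⁻¹) • fderiv ℝ v x) x :=
        (hasDerivAt_inv hvne).comp_hasFDerivAt x (hvdAt x hx).hasFDerivAt
      simp only [div_eq_mul_inv]
      exact ((hudAt x hx).hasFDerivAt.mul hinv).differentiableAt.differentiableWithinAt
    refine ⟨u x₀ / v x₀, fun x hx => ?_⟩
    have hconst := const_of_fderiv_zero hΩ hconn _ hdiv hquot hx hx₀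
    have hvne : v x ≠ 0 := ne_of_gt (hvpos x hx)
    calc u x = (u x / v x) * v x := (div_mul_cancel₀ (u x) hvne).symm
      _ = (u x₀ / v x₀) * v x := by rw [hconst]
  · intro α hα x hx
    -- fderiv u = α • fderiv v on Ω
    have hA : ∀ y ∈ Ω, fderiv ℝ u y = α • fderiv ℝ v y := by
      intro y hy
      have heq : u =ᶠ[nhds y] fun z => α * v z :=
        Filter.eventuallyEq_of_mem (hΩ.mem_nhds hy) hα
      rw [heq.fderiv_eq, fderiv_const_mul (hvdAt y hy) α]
    have hgrad : gradient u x = α • gradient v x := by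
      unfold gradient
      rw [hA x hx, _root_.map_smul]
    have hratio : u x / v x = α := by
      rw [hα x hx, mul_div_assoc, div_self (ne_of_gt (hvpos x hx)), mul_one]
    have hlapu : lap u x = α * lap v x := by
      unfold lap
      rw [Finset.mul_sum]
      apply Finset.sum_congr rfl
      intro i _
      have hdiffv : DifferentiableAt ℝ (fun y => fderiv ℝ v y (EuclideanSpace.single i 1)) x := by
        have h1 : ContDiffAt ℝ 1 (fderiv ℝ v) x := by
          have := (hv.contDiffAt (hΩ.mem_nhds hx))
          exact this.fderiv_right (by norm_num)
        exact (h1.differentiableAt (by norm_num)).clm_apply (differentiableAt_const _)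
      have heq2 : (fun y => fderiv ℝ u y (EuclideanSpace.single i 1)) =ᶠ[nhds x]
          fun y => α * fderiv ℝ v y (EuclideanSpace.single i 1) := by
        apply Filter.eventuallyEq_of_mem (hΩ.mem_nhds hx)
        intro y hy
        simp only [hA y hy, ContinuousLinearMap.smul_apply, smul_eq_mul]
      rw [heq2.fderiv_eq, fderiv_const_mul hdiffv α]
      simp
    rw [hgrad, hratio, hlapu]
    simp [sub_self]
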